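/- Let n ≥ 11 and d = n − 2k for some positive integer k, with 4 ≤ d ≤ n−8. Then the number of maximal unrefinable partitions of T_n − d equals the number of partitions of 2(k+1) into distinct odd parts (with at least two parts). -/

import Mathlib

/-- The n-th triangular number. -/
def T (n : ℕ) : ℕ := n * (n + 1) / 2

/-- A partition of `N` into distinct parts, represented as a finite set of
positive integers with at least two elements summing to `N`. -/
def DistinctPartition (N : ℕ) (S : Finset ℕ) : Prop :=
  (∀ x ∈ S, 0 < x) ∧ 2 ≤ S.card ∧ S.sum id = N

/-- The missing parts: integers in `{1, …, λ_t}` not appearing in the partition. -/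
def Missing (S : Finset ℕ) : Finset ℕ := Finset.Icc 1 (S.sup id) \ S

/-- No part is the sum of two distinct missing parts. -/
def Unrefinable (S : Finset ℕ) : Prop :=
  ∀ a ∈ Missing S, ∀ b ∈ Missing S, a ≠ b → a + b ∉ S

def UnrefinablePartition (N : ℕ) (S : Finset ℕ) : Prop :=
  DistinctPartition N S ∧ Unrefinable S

/-- A maximal unrefinable partition: its largest part is maximal among the
largest parts of all unrefinable partitions of `N`. -/
def MaximalUnrefinable (N : ℕ) (S : Finset ℕ) : Prop :=
  UnrefinablePartition N S ∧
    ∀ S' : Finset ℕ, UnrefinablePartition N S' → S'.sup id ≤ S.sup id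

set_option linter.unusedSectionVars false


-- facts about partitions of 2k+2 into distinct odd parts
section LamFacts
variable {k : ℕ} {Λ : Finset ℕ} (hpos : ∀ x ∈ Λ, 0 < x) (hcard : 2 ≤ Λ.card)
  (hsum : ∑ x ∈ Λ, x = 2*k+2)

include hpos hcard hsum

lemma pair_le : ∀ l ∈ Λ, ∀ mu ∈ Λ, l ≠ mu → l + mu ≤ 2*k+2 := by
  intro l hl mu hmu hne
  have hsub : {l, mu} ⊆ Λ := by
    intro x hx; simp only [Finset.mem_insert, Finset.mem_singleton] at hx
    rcases hx with rfl | rfl <;> assumption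
  have h' : (∑ x ∈ ({l, mu} : Finset ℕ), x) ≤ ∑ x ∈ Λ, x :=
    Finset.sum_le_sum_of_subset hsub
  rw [Finset.sum_pair hne] at h'
  omega

lemma lam_le : ∀ l ∈ Λ, l ≤ 2*k+1 := by
  intro l hl
  obtain ⟨mu, hmu, hne⟩ := Finset.exists_mem_ne (show 1 < Λ.card by omega) l
  have := pair_le hpos hcard hsum l hl mu hmu (Ne.symm hne)
  have := hpos mu hmu
  omega

lemma triple_le : ∀ l ∈ Λ, ∀ mu ∈ Λ, ∀ nu ∈ Λ, l ≠ mu → l ≠ nu → mu ≠ nu →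
    l + mu + nu ≤ 2*k+2 := by
  intro l hl mu hmu nu hnu h1 h2 h3
  have hsub : {l, mu, nu} ⊆ Λ := by
    intro x hx; simp only [Finset.mem_insert, Finset.mem_singleton] at hx
    rcases hx with rfl | rfl | rfl <;> assumption
  have hs : (∑ x ∈ ({l, mu, nu} : Finset ℕ), x) ≤ ∑ x ∈ Λ, x :=
    Finset.sum_le_sum_of_subset hsub
  rw [Finset.sum_insert (by simp [h1, h2]), Finset.sum_pair h3] at hs
  omega

lemma exact_pair : ∀ l ∈ Λ, ∀ mu ∈ Λ, l ≠ mu → l + mu = 2*k+2 → Λ = {l, mu} := by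
  intro l hl mu hmu hne heq
  have hsub : {l, mu} ⊆ Λ := by
    intro x hx; simp only [Finset.mem_insert, Finset.mem_singleton] at hx
    rcases hx with rfl | rfl <;> assumption
  have hdiff : (∑ x ∈ Λ \ {l, mu}, x) + ∑ x ∈ ({l, mu} : Finset ℕ), x = ∑ x ∈ Λ, x :=
    Finset.sum_sdiff hsub
  rw [Finset.sum_pair hne] at hdiff
  have hz : ∑ x ∈ Λ \ {l, mu}, x = 0 := by omega
  have hempty : Λ \ {l, mu} = ∅ := by
    by_contra hc
    obtain ⟨y, hy⟩ := Finset.nonempty_of_ne_empty hc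
    have h1 : 0 < y := hpos y (Finset.mem_sdiff.mp hy).1
    have h2 : y ≤ ∑ x ∈ Λ \ {l, mu}, x :=
      Finset.single_le_sum (fun i _ => Nat.zero_le i) hy
    omega
  have := Finset.sdiff_eq_empty_iff_subset.mp hempty
  exact Finset.Subset.antisymm this hsub

end LamFacts

def Bf (n lam : ℕ) : ℕ := (2*n - 5 - lam) / 2
def Gf (n lam : ℕ) : ℕ := (2*n - 5 + lam) / 2
def PhiSp (n : ℕ) : Finset ℕ := Finset.Icc 1 (n-2) ∪ {2*n-5}
def PhiGen (n : ℕ) (Λ : Finset ℕ) : Finset ℕ :=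
  (Finset.Icc 1 (n-3) \ Λ.image (Bf n)) ∪ Λ.image (Gf n) ∪ {2*n-5}
def Phi (n k : ℕ) (Λ : Finset ℕ) : Finset ℕ :=
  if n = 2*k + 4 ∧ Λ = {1, 2*k+1} then PhiSp n else PhiGen n Λ

lemma Bf_spec (n lam : ℕ) (h1 : Odd lam) (h2 : lam ≤ 2*n-7) : 2 * Bf n lam + lam = 2*n-5 := by
  obtain ⟨t, rfl⟩ := h1
  simp only [Bf]
  omega

lemma Gf_spec (n lam : ℕ) (h1 : Odd lam) (h2 : 3 ≤ n) : 2 * Gf n lam = 2*n-5 + lam := by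
  obtain ⟨t, rfl⟩ := h1
  simp only [Gf]
  omega


lemma T_mul_two' (m : ℕ) : T m * 2 = m * (m+1) := by
  have h : 2 ∣ m * (m+1) := (Nat.even_mul_succ_self m).two_dvd
  simpa [T] using Nat.div_mul_cancel h
lemma T_succ' (m : ℕ) : T (m+1) = T m + (m+1) := by
  have h1 := T_mul_two' m
  have h2 := T_mul_two' (m+1)
  have h3 : (m+1) * (m+1+1) = m*(m+1) + 2*(m+1) := by ring
  rw [h3] at h2; omega
lemma T_add3' (m : ℕ) : T (m+3) = T m + (3*m+6) := by
  have h1 := T_succ' m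
  have h2 : T (m+2) = T (m+1) + (m+2) := T_succ' (m+1)
  have h3 : T (m+3) = T (m+2) + (m+3) := T_succ' (m+2)
  omega
lemma T_sub3 (m : ℕ) (h : 3 ≤ m) : T m = T (m-3) + (3*m-3) := by
  have h2 := T_add3' (m-3)
  rw [show m-3+3 = m by omega] at h2
  omega
lemma sum_Icc_id' (m : ℕ) : ∑ x ∈ Finset.Icc 1 m, x = T m := by
  induction m with
  | zero => simp [T]
  | succ p ih => rw [Finset.sum_Icc_succ_top (by omega), ih, T_succ']

lemma phiGen_UP (n k d : ℕ) (hn : n = d + 2*k) (hd4 : 4 ≤ d) (hk4 : 4 ≤ k)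
    (Λ : Finset ℕ) (hpos : ∀ x ∈ Λ, 0 < x) (hcard : 2 ≤ Λ.card)
    (hsum : ∑ x ∈ Λ, x = 2*k+2) (hodd : ∀ x ∈ Λ, Odd x)
    (hexcl : ¬(n = 2*k+4 ∧ Λ = {1, 2*k+1})) :
    (PhiGen n Λ).sup id = 2*n-5 ∧ UnrefinablePartition (T n - d) (PhiGen n Λ) := by
  have hlam : ∀ l ∈ Λ, 1 ≤ l ∧ l ≤ 2*k+1 ∧ (2 * Bf n l + l = 2*n-5) ∧ (2 * Gf n l = 2*n-5 + l) := by
    intro l hl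
    have h1 := hpos l hl
    have h2 := lam_le hpos hcard hsum l hl
    have h3 := Bf_spec n l (hodd l hl) (by omega)
    have h4 := Gf_spec n l (hodd l hl) (by omega)
    omega
  have hmem : ∀ x, x ∈ PhiGen n Λ ↔
      ((1 ≤ x ∧ x ≤ n-3 ∧ x ∉ Λ.image (Bf n)) ∨ x ∈ Λ.image (Gf n) ∨ x = 2*n-5) := by
    intro x
    simp only [PhiGen, Finset.mem_union, Finset.mem_sdiff, Finset.mem_Icc, Finset.mem_singleton]
    tauto
  have hBdom : ∀ x ∈ Λ.image (Bf n), 1 ≤ x ∧ x ≤ n-3 := by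
    intro x hx
    obtain ⟨l, hl, rfl⟩ := Finset.mem_image.mp hx
    have := hlam l hl; omega
  have hGdom : ∀ y ∈ Λ.image (Gf n), n-2 ≤ y ∧ y ≤ 2*n-6 := by
    intro y hy
    obtain ⟨l, hl, rfl⟩ := Finset.mem_image.mp hy
    have := hlam l hl; omega
  have hbound : ∀ x ∈ PhiGen n Λ, 1 ≤ x ∧ x ≤ 2*n-5 := by
    intro x hx
    rcases (hmem x).mp hx with h | h | rfl
    · omega
    · have := hGdom x h; omega
    · omega
  have hLmem : 2*n-5 ∈ PhiGen n Λ := (hmem _).mpr (Or.inr (Or.inr rfl))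
  have hsup : (PhiGen n Λ).sup id = 2*n-5 := by
    apply le_antisymm
    · exact Finset.sup_le (fun x hx => (hbound x hx).2)
    · exact Finset.le_sup (f := id) hLmem
  refine ⟨hsup, ⟨⟨fun x hx => (hbound x hx).1, ?_, ?_⟩, ?_⟩⟩
  · -- card ≥ 2
    have h1 : 1 ∈ PhiGen n Λ := by
      apply (hmem 1).mpr
      left
      refine ⟨le_refl 1, by omega, ?_⟩
      intro hc
      have := hBdom 1 hc
      obtain ⟨l, hl, he⟩ := Finset.mem_image.mp hc
      have := hlam l hl; omega
    have hsub : ({1, 2*n-5} : Finset ℕ) ⊆ PhiGen n Λ := by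
      intro x hx; simp only [Finset.mem_insert, Finset.mem_singleton] at hx
      rcases hx with rfl | rfl
      · exact h1
      · exact hLmem
    have := Finset.card_le_card hsub
    rw [Finset.card_pair (by omega)] at this
    exact this
  · -- sum
    show ∑ x ∈ PhiGen n Λ, x = T n - d
    have hBinj : ∀ x ∈ Λ, ∀ y ∈ Λ, Bf n x = Bf n y → x = y := by
      intro x hx y hy hxy
      have := hlam x hx; have := hlam y hy; omega
    have hGinj : ∀ x ∈ Λ, ∀ y ∈ Λ, Gf n x = Gf n y → x = y := by
      intro x hx y hy hxy
      have := hlam x hx; have := hlam y hy; omega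
    have hBsub : Λ.image (Bf n) ⊆ Finset.Icc 1 (n-3) := by
      intro x hx; have := hBdom x hx; simp only [Finset.mem_Icc]; omega
    have hdisj1 : Disjoint (Finset.Icc 1 (n-3) \ Λ.image (Bf n)) (Λ.image (Gf n)) := by
      rw [Finset.disjoint_left]
      intro x hx hx2
      have := hGdom x hx2
      simp only [Finset.mem_sdiff, Finset.mem_Icc] at hx
      omega
    have hdisj2 : Disjoint ((Finset.Icc 1 (n-3) \ Λ.image (Bf n)) ∪ Λ.image (Gf n))
        ({2*n-5} : Finset ℕ) := by
      rw [Finset.disjoint_right]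
      intro x hx
      simp only [Finset.mem_singleton] at hx
      subst hx
      intro hc
      rcases Finset.mem_union.mp hc with h | h
      · have := Finset.mem_sdiff.mp h
        have := Finset.mem_Icc.mp this.1
        omega
      · have := hGdom _ h; omega
    have e0 : ∑ x ∈ PhiGen n Λ, x
        = (∑ x ∈ (Finset.Icc 1 (n-3) \ Λ.image (Bf n)) ∪ Λ.image (Gf n), x) + (2*n-5) := by
      rw [PhiGen, Finset.sum_union hdisj2, Finset.sum_singleton]
    have e1 : ∑ x ∈ (Finset.Icc 1 (n-3) \ Λ.image (Bf n)) ∪ Λ.image (Gf n), x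
        = (∑ x ∈ Finset.Icc 1 (n-3) \ Λ.image (Bf n), x) + ∑ x ∈ Λ.image (Gf n), x :=
      Finset.sum_union hdisj1
    have e2 : (∑ x ∈ Finset.Icc 1 (n-3) \ Λ.image (Bf n), x) + ∑ x ∈ Λ.image (Bf n), x
        = ∑ x ∈ Finset.Icc 1 (n-3), x := Finset.sum_sdiff hBsub
    have e3 : ∑ x ∈ Λ.image (Bf n), x = ∑ l ∈ Λ, Bf n l := Finset.sum_image hBinj
    have e4 : ∑ x ∈ Λ.image (Gf n), x = ∑ l ∈ Λ, Gf n l := Finset.sum_image hGinj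
    have e5 : ∑ l ∈ Λ, Gf n l = ∑ l ∈ Λ, (Bf n l + l) :=
      Finset.sum_congr rfl (fun l hl => by have := hlam l hl; omega)
    have e6 : ∑ l ∈ Λ, (Bf n l + l) = (∑ l ∈ Λ, Bf n l) + ∑ l ∈ Λ, l :=
      Finset.sum_add_distrib
    have e7 := sum_Icc_id' (n-3)
    have e8 := T_sub3 n (by omega)
    omega
  · -- unrefinable
    intro a haM b hbM hab
    rw [Missing, hsup] at haM hbM
    have ha := Finset.mem_sdiff.mp haM
    have hb := Finset.mem_sdiff.mp hbM
    have ha1 := Finset.mem_Icc.mp ha.1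
    have hb1 := Finset.mem_Icc.mp hb.1
    have hchar : ∀ x, 1 ≤ x → x ≤ 2*n-5 → x ∉ PhiGen n Λ →
        (x ∈ Λ.image (Bf n) ∧ x ≤ n-3) ∨ (n-2 ≤ x ∧ x ≤ 2*n-6 ∧ x ∉ Λ.image (Gf n)) := by
      intro x h1 h2 h3
      rw [hmem] at h3
      push_neg at h3
      by_cases hx : x ≤ n-3
      · exact Or.inl ⟨h3.1 h1 hx, hx⟩
      · right
        refine ⟨by omega, by omega, h3.2.1⟩
    intro hcon
    have hcon1 := (hbound _ hcon).2
    rcases hchar a ha1.1 ha1.2 ha.2 with ⟨haB, hale⟩ | ⟨hage, hale, haG⟩ <;>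
      rcases hchar b hb1.1 hb1.2 hb.2 with ⟨hbB, hble⟩ | ⟨hbge, hble, hbG⟩
    · -- both in B
      obtain ⟨la, hla, hea⟩ := Finset.mem_image.mp haB
      obtain ⟨lb, hlb, heb⟩ := Finset.mem_image.mp hbB
      have hfa := hlam la hla
      have hfb := hlam lb hlb
      have hlane : la ≠ lb := by intro h; subst h; omega
      have hpl := pair_le hpos hcard hsum la hla lb hlb hlane
      rcases (hmem _).mp hcon with h | h | h
      · omega
      · obtain ⟨mu, hmu, hemu⟩ := Finset.mem_image.mp h
        have hfm := hlam mu hmu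
        by_cases hm1 : mu = la
        · subst hm1
          have h9 : n = 2*k+4 ∧ mu = 2*k+1 ∧ lb = 1 := by omega
          have := exact_pair hpos hcard hsum mu hmu lb hlb hlane (by omega)
          apply hexcl
          refine ⟨h9.1, ?_⟩
          rw [this, h9.2.1, h9.2.2]
          exact Finset.pair_comm _ _
        · by_cases hm2 : mu = lb
          · subst hm2
            have h9 : n = 2*k+4 ∧ mu = 2*k+1 ∧ la = 1 := by omega
            have := exact_pair hpos hcard hsum la hla mu hmu hlane (by omega)
            apply hexcl
            refine ⟨h9.1, ?_⟩
            rw [this, h9.2.1, h9.2.2]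
          · have := triple_le hpos hcard hsum la hla lb hlb mu hmu hlane
              (fun h => hm1 h.symm) (fun h => hm2 h.symm)
            omega
      · omega
    · -- a in B, b large missing
      obtain ⟨la, hla, hea⟩ := Finset.mem_image.mp haB
      have hfa := hlam la hla
      rcases (hmem _).mp hcon with h | h | h
      · omega
      · obtain ⟨mu, hmu, hemu⟩ := Finset.mem_image.mp h
        have hfm := hlam mu hmu
        by_cases hm1 : mu = la
        · subst hm1; omega
        · have hpl := pair_le hpos hcard hsum mu hmu la hla hm1
          omega
      · -- a+b = 2n-5 forces b = Gf la
        exfalso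
        apply hbG
        apply Finset.mem_image.mpr
        exact ⟨la, hla, by omega⟩
    · -- a large missing, b in B (symmetric)
      obtain ⟨lb, hlb, heb⟩ := Finset.mem_image.mp hbB
      have hfb := hlam lb hlb
      rcases (hmem _).mp hcon with h | h | h
      · omega
      · obtain ⟨mu, hmu, hemu⟩ := Finset.mem_image.mp h
        have hfm := hlam mu hmu
        by_cases hm1 : mu = lb
        · subst hm1; omega
        · have hpl := pair_le hpos hcard hsum mu hmu lb hlb hm1
          omega
      · exfalso
        apply haG
        apply Finset.mem_image.mpr
        exact ⟨lb, hlb, by omega⟩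
    · -- both large missing
      omega

lemma T_sub2 (m : ℕ) (h : 2 ≤ m) : T m = T (m-2) + (2*m-1) := by
  have a := T_succ' (m-2)
  have b := T_succ' (m-1)
  rw [show m-2+1 = m-1 by omega] at a
  rw [show m-1+1 = m by omega] at b
  omega

lemma phiSp_UP (n k : ℕ) (hn : n = 4 + 2*k) (hk4 : 4 ≤ k) :
    (PhiSp n).sup id = 2*n-5 ∧ UnrefinablePartition (T n - 4) (PhiSp n) := by
  have hmem : ∀ x, x ∈ PhiSp n ↔ ((1 ≤ x ∧ x ≤ n-2) ∨ x = 2*n-5) := by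
    intro x
    simp only [PhiSp, Finset.mem_union, Finset.mem_Icc, Finset.mem_singleton]
  have hbound : ∀ x ∈ PhiSp n, 1 ≤ x ∧ x ≤ 2*n-5 := by
    intro x hx; rcases (hmem x).mp hx with h | rfl <;> omega
  have hLmem : 2*n-5 ∈ PhiSp n := (hmem _).mpr (Or.inr rfl)
  have hsup : (PhiSp n).sup id = 2*n-5 := by
    apply le_antisymm
    · exact Finset.sup_le (fun x hx => (hbound x hx).2)
    · exact Finset.le_sup (f := id) hLmem
  refine ⟨hsup, ⟨⟨fun x hx => (hbound x hx).1, ?_, ?_⟩, ?_⟩⟩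
  · have hsub : ({1, 2*n-5} : Finset ℕ) ⊆ PhiSp n := by
      intro x hx; simp only [Finset.mem_insert, Finset.mem_singleton] at hx
      rcases hx with rfl | rfl
      · exact (hmem _).mpr (Or.inl ⟨le_refl 1, by omega⟩)
      · exact hLmem
    have := Finset.card_le_card hsub
    rw [Finset.card_pair (by omega)] at this
    exact this
  · show ∑ x ∈ PhiSp n, x = T n - 4
    have hdisj : Disjoint (Finset.Icc 1 (n-2)) ({2*n-5} : Finset ℕ) := by
      rw [Finset.disjoint_right]
      intro x hx
      simp only [Finset.mem_singleton] at hx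
      subst hx
      intro hc
      have := Finset.mem_Icc.mp hc
      omega
    rw [PhiSp, Finset.sum_union hdisj, Finset.sum_singleton, sum_Icc_id']
    have := T_sub2 n (by omega)
    omega
  · intro a haM b hbM hab
    rw [Missing, hsup] at haM hbM
    have ha := Finset.mem_sdiff.mp haM
    have hb := Finset.mem_sdiff.mp hbM
    have ha1 := Finset.mem_Icc.mp ha.1
    have hb1 := Finset.mem_Icc.mp hb.1
    have ha2 : n-1 ≤ a := by
      by_contra hc
      exact ha.2 ((hmem a).mpr (Or.inl ⟨ha1.1, by omega⟩))
    have hb2 : n-1 ≤ b := by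
      by_contra hc
      exact hb.2 ((hmem b).mpr (Or.inl ⟨hb1.1, by omega⟩))
    intro hcon
    have := (hbound _ hcon).2
    omega

lemma sup_id_mem (S : Finset ℕ) (h : S.Nonempty) : S.sup id ∈ S := by
  have h1 : S.max' h = S.sup' h id := Finset.max'_eq_sup' S h
  have h2 : S.sup' h id = S.sup id := Finset.sup'_eq_sup h id
  have := S.max'_mem h
  rwa [h1, h2] at this

lemma decomp (S : Finset ℕ) (L' h : ℕ) (hLmem : L' ∈ S)
    (hh : 2*h < L')
    (hpair : ∀ a, 1 ≤ a → a ≤ h → a ∈ S ∨ L' - a ∈ S) :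
    (Finset.Icc 1 h \ S).image (fun a => L' - a) ⊆ (S.erase L') \ Finset.Icc 1 h ∧
    (∑ x ∈ S, x) + ∑ x ∈ Finset.Icc 1 h \ S, x
      = L' + T h + ∑ x ∈ (S.erase L') \ Finset.Icc 1 h, x := by
  constructor
  · intro x hx
    simp only [Finset.mem_image, Finset.mem_sdiff, Finset.mem_Icc] at hx
    obtain ⟨a, ⟨⟨ha1, ha2⟩, haS⟩, rfl⟩ := hx
    have hLa : L' - a ∈ S := by
      rcases hpair a ha1 ha2 with h' | h'
      · exact absurd h' haS
      · exact h'
    simp only [Finset.mem_sdiff, Finset.mem_erase, Finset.mem_Icc]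
    exact ⟨⟨by omega, hLa⟩, by omega⟩
  · have e1 : (∑ x ∈ S.erase L', x) + L' = ∑ x ∈ S, x :=
      Finset.sum_erase_add S _ hLmem
    have e2 : (∑ x ∈ (S.erase L') ∩ Finset.Icc 1 h, x)
        + ∑ x ∈ (S.erase L') \ Finset.Icc 1 h, x = ∑ x ∈ S.erase L', x :=
      Finset.sum_inter_add_sum_sdiff _ _ _
    have e3 : (S.erase L') ∩ Finset.Icc 1 h = Finset.Icc 1 h \ (Finset.Icc 1 h \ S) := by
      ext x
      simp only [Finset.mem_inter, Finset.mem_erase, Finset.mem_sdiff, Finset.mem_Icc]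
      constructor
      · rintro ⟨⟨hne, hS⟩, hicc⟩
        exact ⟨hicc, fun h' => absurd hS h'.2⟩
      · rintro ⟨hicc, h'⟩
        have hS : x ∈ S := by by_contra hc; exact h' ⟨hicc, hc⟩
        exact ⟨⟨by omega, hS⟩, hicc⟩
    have e4 : (∑ x ∈ Finset.Icc 1 h \ (Finset.Icc 1 h \ S), x)
        + ∑ x ∈ Finset.Icc 1 h \ S, x = ∑ x ∈ Finset.Icc 1 h, x :=
      Finset.sum_sdiff Finset.sdiff_subset
    have e5 := sum_Icc_id' h
    rw [e3] at e2
    omega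

lemma pair_hit (S : Finset ℕ) (hunref : Unrefinable S) (hne : S.Nonempty)
    (a b : ℕ) (hab : a + b = S.sup id) (hne' : a ≠ b) (ha : 1 ≤ a) (hb : 1 ≤ b) :
    a ∈ S ∨ b ∈ S := by
  by_contra hc
  push_neg at hc
  have hLmem := sup_id_mem S hne
  have haM : a ∈ Missing S := by
    simp only [Missing, Finset.mem_sdiff, Finset.mem_Icc]
    exact ⟨⟨ha, by omega⟩, hc.1⟩
  have hbM : b ∈ Missing S := by
    simp only [Missing, Finset.mem_sdiff, Finset.mem_Icc]
    exact ⟨⟨hb, by omega⟩, hc.2⟩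
  exact hunref a haM b hbM hne' (hab ▸ hLmem)

lemma classify (n k d : ℕ) (hn : n = d + 2*k) (hd4 : 4 ≤ d) (hk4 : 4 ≤ k)
    (S : Finset ℕ) (hpos : ∀ x ∈ S, 0 < x) (hcard : 2 ≤ S.card)
    (hsum : ∑ x ∈ S, x = T n - d) (hunref : Unrefinable S)
    (hsup : S.sup id = 2*n-5) :
    ∃ Λ : Finset ℕ, ((∀ x ∈ Λ, 0 < x) ∧ 2 ≤ Λ.card ∧ (∑ x ∈ Λ, x = 2*k+2)
      ∧ ∀ x ∈ Λ, Odd x) ∧ Phi n k Λ = S := by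
  have hne : S.Nonempty := Finset.card_pos.mp (by omega)
  have hLmem : 2*n-5 ∈ S := hsup ▸ sup_id_mem S hne
  have hxle : ∀ x ∈ S, x ≤ 2*n-5 := by
    intro x hx
    have := Finset.le_sup (f := id) hx
    rw [hsup] at this
    exact this
  have hpair : ∀ a, 1 ≤ a → a ≤ n-3 → a ∈ S ∨ 2*n-5 - a ∈ S := by
    intro a h1 h2
    exact pair_hit S hunref hne a (2*n-5 - a) (by rw [hsup]; omega) (by omega) h1 (by omega)
  obtain ⟨hsub, hkey⟩ := decomp S (2*n-5) (n-3) hLmem (by omega) hpair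
  have hBmem : ∀ a ∈ Finset.Icc 1 (n-3) \ S, 1 ≤ a ∧ a ≤ n-3 ∧ a ∉ S := by
    intro a ha
    have := Finset.mem_sdiff.mp ha
    have := Finset.mem_Icc.mp this.1
    have := (Finset.mem_sdiff.mp ha).2
    exact ⟨by omega, by omega, this⟩
  have him : ∑ x ∈ (Finset.Icc 1 (n-3) \ S).image (fun a => 2*n-5 - a), x
      = ∑ a ∈ Finset.Icc 1 (n-3) \ S, (2*n-5 - a) := by
    rw [Finset.sum_image]
    intro x hx y hy hxy
    have := hBmem x hx; have := hBmem y hy; simp only at hxy; omega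
  have hsplit : (∑ x ∈ ((S.erase (2*n-5)) \ Finset.Icc 1 (n-3))
        \ (Finset.Icc 1 (n-3) \ S).image (fun a => 2*n-5 - a), x)
      + ∑ x ∈ (Finset.Icc 1 (n-3) \ S).image (fun a => 2*n-5 - a), x
      = ∑ x ∈ (S.erase (2*n-5)) \ Finset.Icc 1 (n-3), x := Finset.sum_sdiff hsub
  have hpt : ∑ a ∈ Finset.Icc 1 (n-3) \ S, (a+1) ≤ ∑ a ∈ Finset.Icc 1 (n-3) \ S, (2*n-5 - a) :=
    Finset.sum_le_sum (fun a ha => by have := hBmem a ha; omega)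
  have hpt2 : ∑ a ∈ Finset.Icc 1 (n-3) \ S, (a+1)
      = (∑ a ∈ Finset.Icc 1 (n-3) \ S, a) + (Finset.Icc 1 (n-3) \ S).card := by
    rw [Finset.sum_add_distrib, Finset.sum_const, smul_eq_mul, mul_one]
  have hrestge : ∀ x ∈ ((S.erase (2*n-5)) \ Finset.Icc 1 (n-3))
      \ (Finset.Icc 1 (n-3) \ S).image (fun a => 2*n-5 - a), n-2 ≤ x := by
    intro x hx
    have h1 := Finset.mem_sdiff.mp (Finset.mem_sdiff.mp hx).1
    have h2 : x ∈ S := Finset.mem_of_mem_erase h1.1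
    have h3 := hpos x h2
    have h4 : ¬(1 ≤ x ∧ x ≤ n-3) := by
      intro hc; exact h1.2 (Finset.mem_Icc.mpr hc)
    omega
  have hT := T_sub3 n (by omega)
  rcases Finset.eq_empty_or_nonempty (((S.erase (2*n-5)) \ Finset.Icc 1 (n-3))
      \ (Finset.Icc 1 (n-3) \ S).image (fun a => 2*n-5 - a)) with hrest | hrest
  · -- E = image case: main generic case
    have hEim : (S.erase (2*n-5)) \ Finset.Icc 1 (n-3)
        = (Finset.Icc 1 (n-3) \ S).image (fun a => 2*n-5 - a) :=
      Finset.Subset.antisymm (Finset.sdiff_eq_empty_iff_subset.mp hrest) hsub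
    rw [hrest, Finset.sum_empty, zero_add] at hsplit
    -- Σim = ΣB + 2k+2
    have hkey2 : ∑ a ∈ Finset.Icc 1 (n-3) \ S, (2*n-5 - a)
        = (∑ a ∈ Finset.Icc 1 (n-3) \ S, a) + (2*k+2) := by omega
    refine ⟨(Finset.Icc 1 (n-3) \ S).image (fun a => 2*n-5 - 2*a), ⟨?_, ?_, ?_, ?_⟩, ?_⟩
    · intro x hx
      obtain ⟨a, ha, rfl⟩ := Finset.mem_image.mp hx
      have := hBmem a ha; omega
    · -- card ≥ 2
      have hinj : Set.InjOn (fun a => 2*n-5 - 2*a) ((Finset.Icc 1 (n-3) \ S : Finset ℕ) : Set ℕ) := by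
        intro x hx y hy hxy
        have := hBmem x (Finset.mem_coe.mp hx); have := hBmem y (Finset.mem_coe.mp hy)
        simp only at hxy
        omega
      rw [Finset.card_image_of_injOn hinj]
      by_contra hc
      push_neg at hc
      interval_cases hcb : (Finset.Icc 1 (n-3) \ S).card
      · have hBe : Finset.Icc 1 (n-3) \ S = ∅ := Finset.card_eq_zero.mp hcb
        rw [hBe] at hkey2
        simp at hkey2
      · obtain ⟨a, hBa⟩ := Finset.card_eq_one.mp hcb
        rw [hBa] at hkey2
        simp only [Finset.sum_singleton] at hkey2
        have : a ∈ Finset.Icc 1 (n-3) \ S := by rw [hBa]; simp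
        have := hBmem a this
        omega
    · -- sum = 2k+2
      have hsi : ∑ x ∈ (Finset.Icc 1 (n-3) \ S).image (fun a => 2*n-5 - 2*a), x
          = ∑ a ∈ Finset.Icc 1 (n-3) \ S, (2*n-5 - 2*a) := by
        rw [Finset.sum_image]
        intro x hx y hy hxy
        have := hBmem x hx; have := hBmem y hy; simp only at hxy; omega
      have hps : ∑ a ∈ Finset.Icc 1 (n-3) \ S, ((2*n-5 - 2*a) + a)
          = ∑ a ∈ Finset.Icc 1 (n-3) \ S, (2*n-5 - a) :=
        Finset.sum_congr rfl (fun a ha => by have := hBmem a ha; omega)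
      have hps2 : ∑ a ∈ Finset.Icc 1 (n-3) \ S, ((2*n-5 - 2*a) + a)
          = (∑ a ∈ Finset.Icc 1 (n-3) \ S, (2*n-5 - 2*a))
            + ∑ a ∈ Finset.Icc 1 (n-3) \ S, a := Finset.sum_add_distrib
      omega
    · -- odd
      intro x hx
      obtain ⟨a, ha, rfl⟩ := Finset.mem_image.mp hx
      have := hBmem a ha
      exact ⟨n-3-a, by omega⟩
    · -- Phi = S
      have hexcl : ¬(n = 2*k+4 ∧
          (Finset.Icc 1 (n-3) \ S).image (fun a => 2*n-5 - 2*a) = {1, 2*k+1}) := by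
        rintro ⟨hn4, hΛeq⟩
        have h1 : (2*k+1) ∈ (Finset.Icc 1 (n-3) \ S).image (fun a => 2*n-5 - 2*a) := by
          rw [hΛeq]; simp
        have h2 : (1:ℕ) ∈ (Finset.Icc 1 (n-3) \ S).image (fun a => 2*n-5 - 2*a) := by
          rw [hΛeq]; simp
        obtain ⟨a1, ha1B, he1⟩ := Finset.mem_image.mp h1
        obtain ⟨a2, ha2B, he2⟩ := Finset.mem_image.mp h2
        have hb1 := hBmem a1 ha1B
        have hb2 := hBmem a2 ha2B
        have ha1v : a1 = k+1 := by omega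
        have ha2v : a2 = 2*k+1 := by omega
        have h3 : (2*n-5) - (k+1) ∈ (Finset.Icc 1 (n-3) \ S).image (fun a => 2*n-5 - a) :=
          Finset.mem_image.mpr ⟨a1, ha1B, by rw [ha1v]⟩
        rw [← hEim] at h3
        have h4 : (2*n-5) - (k+1) ∈ S := Finset.mem_of_mem_erase (Finset.mem_sdiff.mp h3).1
        have hm1 : k+1 ∈ Missing S := by
          rw [Missing, hsup]
          refine Finset.mem_sdiff.mpr ⟨Finset.mem_Icc.mpr ⟨by omega, by omega⟩, ?_⟩
          rw [← ha1v]; exact hb1.2.2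
        have hm2 : 2*k+1 ∈ Missing S := by
          rw [Missing, hsup]
          refine Finset.mem_sdiff.mpr ⟨Finset.mem_Icc.mpr ⟨by omega, by omega⟩, ?_⟩
          rw [← ha2v]; exact hb2.2.2
        exact hunref (k+1) hm1 (2*k+1) hm2 (by omega) (by rw [show (k+1)+(2*k+1) = 2*n-5-(k+1) by omega]; exact h4)
      rw [Phi, if_neg hexcl]
      have hBf : ((Finset.Icc 1 (n-3) \ S).image (fun a => 2*n-5 - 2*a)).image (Bf n)
          = Finset.Icc 1 (n-3) \ S := by
        rw [Finset.image_image]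
        have : Finset.image (Bf n ∘ fun a => 2*n-5 - 2*a) (Finset.Icc 1 (n-3) \ S)
            = Finset.image id (Finset.Icc 1 (n-3) \ S) := by
          apply Finset.image_congr
          intro a ha
          have := hBmem a (Finset.mem_coe.mp ha)
          simp only [Function.comp_apply, Bf, id_eq]
          omega
        rw [this, Finset.image_id]
      have hGfim : ((Finset.Icc 1 (n-3) \ S).image (fun a => 2*n-5 - 2*a)).image (Gf n)
          = (Finset.Icc 1 (n-3) \ S).image (fun a => 2*n-5 - a) := by
        rw [Finset.image_image]
        apply Finset.image_congr
        intro a ha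
        have := hBmem a (Finset.mem_coe.mp ha)
        simp only [Function.comp_apply, Gf]
        omega
      rw [PhiGen, hBf, hGfim, ← hEim, Finset.sdiff_sdiff_self_left]
      ext x
      simp only [Finset.mem_union, Finset.mem_sdiff, Finset.mem_Icc, Finset.mem_singleton,
        Finset.mem_erase, Finset.mem_inter]
      constructor
      · rintro ((⟨hicc, hxS⟩ | ⟨⟨hxne, hxS⟩, hx4⟩) | rfl)
        · exact hxS
        · exact hxS
        · exact hLmem
      · intro hxS
        have hxb := hpos x hxS
        have hxu := hxle x hxS
        by_cases hxL : x = 2*n-5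
        · right; exact hxL
        · left
          by_cases hxs : x ≤ n-3
          · exact Or.inl ⟨⟨by omega, hxs⟩, hxS⟩
          · exact Or.inr ⟨⟨hxL, hxS⟩, fun h1 => hxs h1.2⟩
  · -- exceptional staircase case
    obtain ⟨x, hx⟩ := hrest
    have hxge := hrestge x hx
    have hrge : x ≤ ∑ y ∈ ((S.erase (2*n-5)) \ Finset.Icc 1 (n-3))
        \ (Finset.Icc 1 (n-3) \ S).image (fun a => 2*n-5 - a), y :=
      Finset.single_le_sum (fun i _ => Nat.zero_le i) hx
    have hd4' : d = 4 ∧ (Finset.Icc 1 (n-3) \ S).card = 0 := by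
      constructor <;> omega
    have hBe : Finset.Icc 1 (n-3) \ S = ∅ := Finset.card_eq_zero.mp hd4'.2
    have hime : (Finset.Icc 1 (n-3) \ S).image (fun a => 2*n-5 - a) = ∅ := by
      rw [hBe]; rfl
    have hrsum : ∑ y ∈ ((S.erase (2*n-5)) \ Finset.Icc 1 (n-3))
        \ (Finset.Icc 1 (n-3) \ S).image (fun a => 2*n-5 - a), y = n-2 := by
      rw [hime, Finset.sdiff_empty] at hsplit ⊢
      rw [hBe] at hkey
      simp only [Finset.sum_empty] at hkey hsplit
      omega
    have huniq : ∀ y ∈ ((S.erase (2*n-5)) \ Finset.Icc 1 (n-3))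
        \ (Finset.Icc 1 (n-3) \ S).image (fun a => 2*n-5 - a), y = x := by
      intro y hy
      by_contra hne'
      have hsubp : ({x, y} : Finset ℕ) ⊆ ((S.erase (2*n-5)) \ Finset.Icc 1 (n-3))
          \ (Finset.Icc 1 (n-3) \ S).image (fun a => 2*n-5 - a) := by
        intro z hz
        simp only [Finset.mem_insert, Finset.mem_singleton] at hz
        rcases hz with rfl | rfl <;> assumption
      have hps : (∑ z ∈ ({x, y} : Finset ℕ), z) ≤ n-2 := by
        rw [← hrsum]
        exact Finset.sum_le_sum_of_subset hsubp
      rw [Finset.sum_pair (fun h => hne' h.symm)] at hps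
      have := hrestge y hy
      omega
    have hxv : x = n-2 := by
      have := hrsum ▸ hrge
      omega
    have hEset : (S.erase (2*n-5)) \ Finset.Icc 1 (n-3) = {n-2} := by
      rw [hime, Finset.sdiff_empty] at hx huniq
      apply Finset.eq_singleton_iff_unique_mem.mpr
      refine ⟨hxv ▸ hx, fun y hy => ?_⟩
      rw [← hxv]
      exact huniq y hy
    refine ⟨{1, 2*k+1}, ⟨?_, ?_, ?_, ?_⟩, ?_⟩
    · intro y hy; simp only [Finset.mem_insert, Finset.mem_singleton] at hy
      rcases hy with rfl | rfl <;> omega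
    · rw [Finset.card_pair (by omega)]
    · rw [Finset.sum_pair (by omega)]; omega
    · intro y hy; simp only [Finset.mem_insert, Finset.mem_singleton] at hy
      rcases hy with rfl | rfl
      · exact ⟨0, by omega⟩
      · exact ⟨k, by omega⟩
    · rw [Phi, if_pos ⟨by omega, rfl⟩]
      have hIsub : Finset.Icc 1 (n-3) ⊆ S := by
        intro y hy
        by_contra hc
        have : y ∈ Finset.Icc 1 (n-3) \ S := Finset.mem_sdiff.mpr ⟨hy, hc⟩
        rw [hBe] at this
        exact absurd this (Finset.notMem_empty y)
      have hn2 : n-2 ∈ S := by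
        have : n-2 ∈ (S.erase (2*n-5)) \ Finset.Icc 1 (n-3) := by
          rw [hEset]; exact Finset.mem_singleton_self _
        exact Finset.mem_of_mem_erase (Finset.mem_sdiff.mp this).1
      ext y
      simp only [PhiSp, Finset.mem_union, Finset.mem_Icc, Finset.mem_singleton]
      constructor
      · rintro (⟨hy1, hy2⟩ | rfl)
        · by_cases hy3 : y ≤ n-3
          · exact hIsub (Finset.mem_Icc.mpr ⟨hy1, hy3⟩)
          · have : y = n-2 := by omega
            rw [this]; exact hn2
        · exact hLmem
      · intro hyS
        have hyb := hpos y hyS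
        have hyu := hxle y hyS
        by_cases hyL : y = 2*n-5
        · right; exact hyL
        · left
          refine ⟨hyb, ?_⟩
          by_cases hys : y ≤ n-3
          · omega
          · have : y ∈ (S.erase (2*n-5)) \ Finset.Icc 1 (n-3) := by
              refine Finset.mem_sdiff.mpr ⟨Finset.mem_erase.mpr ⟨hyL, hyS⟩, ?_⟩
              intro hc; exact hys (Finset.mem_Icc.mp hc).2
            rw [hEset] at this
            have := Finset.mem_singleton.mp this
            omega


lemma upper_bound' (n k d : ℕ) (hn : n = d + 2*k) (hd4 : 4 ≤ d) (hk4 : 4 ≤ k)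
    (S : Finset ℕ) (hU : UnrefinablePartition (T n - d) S) : S.sup id ≤ 2*n - 5 := by
  obtain ⟨⟨hpos, hcard, hsum⟩, hunref⟩ := hU
  have hsum' : ∑ x ∈ S, x = T n - d := hsum
  clear hsum
  have hne : S.Nonempty := Finset.card_pos.mp (by omega)
  have hLmem : S.sup id ∈ S := sup_id_mem S hne
  by_contra hcon
  push_neg at hcon
  obtain ⟨m, rfl⟩ : ∃ m, n = m + 3 := ⟨n - 3, by omega⟩
  have hTn := T_add3' m
  have hpair : ∀ a, 1 ≤ a → 2*a < S.sup id → a ∈ S ∨ S.sup id - a ∈ S := by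
    intro a h1 h2
    exact pair_hit S hunref hne a (S.sup id - a) (by omega) (by omega) h1 (by omega)
  rcases eq_or_lt_of_le (show 2*(m+3) - 4 ≤ S.sup id by omega) with hL4 | hL5
  · obtain ⟨hsub, hkey⟩ := decomp S (S.sup id) m hLmem (by omega)
      (fun a h1 h2 => hpair a h1 (by omega))
    have hBmem : ∀ a ∈ Finset.Icc 1 m \ S, 1 ≤ a ∧ a ≤ m := by
      intro a ha
      simp only [Finset.mem_sdiff, Finset.mem_Icc] at ha; omega
    have him : (∑ x ∈ (Finset.Icc 1 m \ S).image (fun a => S.sup id - a), x)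
        = ∑ a ∈ Finset.Icc 1 m \ S, (S.sup id - a) := by
      rw [Finset.sum_image]
      intro x hx y hy hxy
      have := hBmem x hx; have := hBmem y hy; simp only at hxy; omega
    have hsplit : (∑ x ∈ ((S.erase (S.sup id)) \ Finset.Icc 1 m)
          \ (Finset.Icc 1 m \ S).image (fun a => S.sup id - a), x)
        + ∑ x ∈ (Finset.Icc 1 m \ S).image (fun a => S.sup id - a), x
        = ∑ x ∈ (S.erase (S.sup id)) \ Finset.Icc 1 m, x := Finset.sum_sdiff hsub
    have hparity : (∑ a ∈ Finset.Icc 1 m \ S, (S.sup id - a))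
        + ∑ a ∈ Finset.Icc 1 m \ S, a = (Finset.Icc 1 m \ S).card * S.sup id := by
      calc (∑ a ∈ Finset.Icc 1 m \ S, (S.sup id - a)) + ∑ a ∈ Finset.Icc 1 m \ S, a
          = ∑ a ∈ Finset.Icc 1 m \ S, (S.sup id - a + a) := Finset.sum_add_distrib.symm
        _ = ∑ _a ∈ Finset.Icc 1 m \ S, S.sup id := Finset.sum_congr rfl
            (fun a ha => by have := hBmem a ha; omega)
        _ = (Finset.Icc 1 m \ S).card * S.sup id := by rw [Finset.sum_const, smul_eq_mul]
    have heven : Even ((Finset.Icc 1 m \ S).card * S.sup id) := by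
      apply Even.mul_left; exact ⟨m + 1, by omega⟩
    obtain ⟨t, ht⟩ := heven
    have hptle : (∑ a ∈ Finset.Icc 1 m \ S, a) ≤ ∑ a ∈ Finset.Icc 1 m \ S, (S.sup id - a) :=
      Finset.sum_le_sum (fun a ha => by have := hBmem a ha; omega)
    rcases Finset.eq_empty_or_nonempty (((S.erase (S.sup id)) \ Finset.Icc 1 m)
        \ (Finset.Icc 1 m \ S).image (fun a => S.sup id - a)) with hrest | hrest
    · rw [hrest] at hsplit
      simp only [Finset.sum_empty, zero_add] at hsplit
      omega
    · obtain ⟨x, hx⟩ := hrest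
      have hxge : m + 1 ≤ x := by
        have h' := Finset.mem_sdiff.mp (Finset.mem_sdiff.mp hx).1
        simp only [Finset.mem_Icc] at h'
        have hx1 : 1 ≤ x := hpos x (Finset.mem_of_mem_erase h'.1)
        omega
      have hrge : x ≤ ∑ y ∈ ((S.erase (S.sup id)) \ Finset.Icc 1 m)
          \ (Finset.Icc 1 m \ S).image (fun a => S.sup id - a), y :=
        Finset.single_le_sum (fun i _ => Nat.zero_le i) hx
      omega
  · obtain ⟨hsub, hkey⟩ := decomp S (S.sup id) (m+1) hLmem (by omega)
      (fun a h1 h2 => hpair a h1 (by omega))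
    have hBmem : ∀ a ∈ Finset.Icc 1 (m+1) \ S, 1 ≤ a ∧ a ≤ m + 1 := by
      intro a ha
      simp only [Finset.mem_sdiff, Finset.mem_Icc] at ha; omega
    have him : (∑ x ∈ (Finset.Icc 1 (m+1) \ S).image (fun a => S.sup id - a), x)
        = ∑ a ∈ Finset.Icc 1 (m+1) \ S, (S.sup id - a) := by
      rw [Finset.sum_image]
      intro x hx y hy hxy
      have := hBmem x hx; have := hBmem y hy; simp only at hxy; omega
    have hptle : (∑ a ∈ Finset.Icc 1 (m+1) \ S, a)
        ≤ ∑ a ∈ Finset.Icc 1 (m+1) \ S, (S.sup id - a) :=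
      Finset.sum_le_sum (fun a ha => by have := hBmem a ha; omega)
    have hEge : (∑ x ∈ (Finset.Icc 1 (m+1) \ S).image (fun a => S.sup id - a), x)
        ≤ ∑ x ∈ (S.erase (S.sup id)) \ Finset.Icc 1 (m+1), x :=
      Finset.sum_le_sum_of_subset hsub
    have hTh : T (m+1) = T m + (m+1) := T_succ' m
    omega

lemma phiGen_compl (n k d : ℕ) (hn : n = d + 2*k) (hd4 : 4 ≤ d) (hk4 : 4 ≤ k)
    (Λ : Finset ℕ) (hpos : ∀ x ∈ Λ, 0 < x) (hcard : 2 ≤ Λ.card)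
    (hsum : ∑ x ∈ Λ, x = 2*k+2) (hodd : ∀ x ∈ Λ, Odd x) :
    Finset.Icc 1 (n-3) \ PhiGen n Λ = Λ.image (Bf n) := by
  have hlam : ∀ l ∈ Λ, 1 ≤ l ∧ l ≤ 2*k+1 ∧ (2 * Bf n l + l = 2*n-5) ∧ (2 * Gf n l = 2*n-5 + l) := by
    intro l hl
    have h1 := hpos l hl
    have h2 := lam_le hpos hcard hsum l hl
    have h3 := Bf_spec n l (hodd l hl) (by omega)
    have h4 := Gf_spec n l (hodd l hl) (by omega)
    omega
  ext x
  simp only [Finset.mem_sdiff, Finset.mem_Icc, PhiGen, Finset.mem_union, Finset.mem_singleton]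
  constructor
  · rintro ⟨⟨h1, h2⟩, h3⟩
    push_neg at h3
    exact h3.1.1 ⟨h1, h2⟩
  · intro hx
    obtain ⟨l, hl, rfl⟩ := Finset.mem_image.mp hx
    have hf := hlam l hl
    refine ⟨⟨by omega, by omega⟩, ?_⟩
    intro hor
    rcases hor with (h | h) | h
    · exact h.2 hx
    · obtain ⟨mu, hmu, hemu⟩ := Finset.mem_image.mp h
      have := hlam mu hmu
      omega
    · omega

lemma phi_injOn (n k d : ℕ) (hn : n = d + 2*k) (hd4 : 4 ≤ d) (hk4 : 4 ≤ k) :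
    Set.InjOn (Phi n k) {Λ : Finset ℕ |
      (∀ x ∈ Λ, 0 < x) ∧ 2 ≤ Λ.card ∧ (∑ x ∈ Λ, x = 2*k+2) ∧ ∀ x ∈ Λ, Odd x} := by
  intro L1 h1 L2 h2 heq
  obtain ⟨h1p, h1c, h1s, h1o⟩ := h1
  obtain ⟨h2p, h2c, h2s, h2o⟩ := h2
  have hgen : ∀ (La : Finset ℕ), (∀ x ∈ La, 0 < x) → 2 ≤ La.card → (∑ x ∈ La, x = 2*k+2)
      → (∀ x ∈ La, Odd x) → PhiGen n La = PhiSp n → False := by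
    intro La hp hc hs ho heqq
    obtain ⟨l, hl⟩ : La.Nonempty := Finset.card_pos.mp (by omega)
    have hlf : 1 ≤ l ∧ l ≤ 2*k+1 := ⟨hp l hl, lam_le hp hc hs l hl⟩
    have hBl := Bf_spec n l (ho l hl) (by omega)
    have hmemB : Bf n l ∈ Finset.Icc 1 (n-3) \ PhiGen n La := by
      rw [phiGen_compl n k d hn hd4 hk4 La hp hc hs ho]
      exact Finset.mem_image_of_mem _ hl
    rw [heqq] at hmemB
    have h5 := Finset.mem_sdiff.mp hmemB
    have h6 := Finset.mem_Icc.mp h5.1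
    apply h5.2
    simp only [PhiSp, Finset.mem_union, Finset.mem_Icc, Finset.mem_singleton]
    left
    omega
  by_cases c1 : n = 2*k+4 ∧ L1 = {1, 2*k+1} <;> by_cases c2 : n = 2*k+4 ∧ L2 = {1, 2*k+1}
  · rw [c1.2, c2.2]
  · rw [Phi, Phi, if_pos c1, if_neg c2] at heq
    exact (hgen L2 h2p h2c h2s h2o heq.symm).elim
  · rw [Phi, Phi, if_neg c1, if_pos c2] at heq
    exact (hgen L1 h1p h1c h1s h1o heq).elim
  · rw [Phi, Phi, if_neg c1, if_neg c2] at heq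
    have hc1 := phiGen_compl n k d hn hd4 hk4 L1 h1p h1c h1s h1o
    have hc2 := phiGen_compl n k d hn hd4 hk4 L2 h2p h2c h2s h2o
    rw [heq] at hc1
    have himeq : L1.image (Bf n) = L2.image (Bf n) := by rw [← hc1, ← hc2]
    ext l
    constructor
    · intro hl
      have : Bf n l ∈ L2.image (Bf n) := himeq ▸ Finset.mem_image_of_mem _ hl
      obtain ⟨mu, hmu, hemu⟩ := Finset.mem_image.mp this
      have e1 := Bf_spec n l (h1o l hl) (by have := lam_le h1p h1c h1s l hl; omega)
      have e2 := Bf_spec n mu (h2o mu hmu) (by have := lam_le h2p h2c h2s mu hmu; omega)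
      have : mu = l := by omega
      exact this ▸ hmu
    · intro hl
      have : Bf n l ∈ L1.image (Bf n) := himeq ▸ Finset.mem_image_of_mem _ hl
      obtain ⟨mu, hmu, hemu⟩ := Finset.mem_image.mp this
      have e1 := Bf_spec n l (h2o l hl) (by have := lam_le h2p h2c h2s l hl; omega)
      have e2 := Bf_spec n mu (h1o mu hmu) (by have := lam_le h1p h1c h1s mu hmu; omega)
      have : mu = l := by omega
      exact this ▸ hmu

theorem count_d_even_distance (n d k : ℕ) (hn : 11 ≤ n) (hk : 1 ≤ k)
    (hdk : d = n - 2 * k) (hd1 : 4 ≤ d) (hd2 : d ≤ n - 8) :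
    {S : Finset ℕ | MaximalUnrefinable (T n - d) S}.ncard =
      {S : Finset ℕ | DistinctPartition (2 * (k + 1)) S ∧ ∀ x ∈ S, Odd x}.ncard := by
  have hk4 : 4 ≤ k := by omega
  have hnd : n = d + 2*k := by omega
  have hRset : {S : Finset ℕ | DistinctPartition (2 * (k + 1)) S ∧ ∀ x ∈ S, Odd x}
      = {Λ : Finset ℕ | (∀ x ∈ Λ, 0 < x) ∧ 2 ≤ Λ.card ∧ (∑ x ∈ Λ, x = 2*k+2)
          ∧ ∀ x ∈ Λ, Odd x} := by
    ext Λ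
    simp only [Set.mem_setOf_eq, DistinctPartition]
    have hb : Λ.sum id = ∑ x ∈ Λ, x := rfl
    constructor
    · rintro ⟨⟨a, b, c⟩, o⟩
      exact ⟨a, b, by omega, o⟩
    · rintro ⟨a, b, c, o⟩
      exact ⟨⟨a, b, by omega⟩, o⟩
  have hPhiUP : ∀ Λ : Finset ℕ, (∀ x ∈ Λ, 0 < x) → 2 ≤ Λ.card → (∑ x ∈ Λ, x = 2*k+2)
      → (∀ x ∈ Λ, Odd x) →
      (Phi n k Λ).sup id = 2*n-5 ∧ UnrefinablePartition (T n - d) (Phi n k Λ) := by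
    intro Λ hp hc hs ho
    by_cases hcond : n = 2*k+4 ∧ Λ = {1, 2*k+1}
    · rw [Phi, if_pos hcond]
      have hd4' : d = 4 := by omega
      rw [hd4']
      exact phiSp_UP n k (by omega) hk4
    · rw [Phi, if_neg hcond]
      exact phiGen_UP n k d hnd hd1 hk4 Λ hp hc hs ho hcond
  have himg : {S : Finset ℕ | MaximalUnrefinable (T n - d) S}
      = (Phi n k) '' {Λ : Finset ℕ | (∀ x ∈ Λ, 0 < x) ∧ 2 ≤ Λ.card
          ∧ (∑ x ∈ Λ, x = 2*k+2) ∧ ∀ x ∈ Λ, Odd x} := by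
    ext S
    simp only [Set.mem_setOf_eq, Set.mem_image, MaximalUnrefinable]
    constructor
    · rintro ⟨hSU, hSmax⟩
      have hW := hPhiUP {3, 2*k-1}
        (by intro x hx
            simp only [Finset.mem_insert, Finset.mem_singleton] at hx
            rcases hx with rfl | rfl <;> omega)
        (by rw [Finset.card_pair (by omega)])
        (by rw [Finset.sum_pair (by omega)]; omega)
        (by intro x hx
            simp only [Finset.mem_insert, Finset.mem_singleton] at hx
            rcases hx with rfl | rfl
            · exact ⟨1, by omega⟩
            · exact ⟨k-1, by omega⟩)
      have hsupge : 2*n-5 ≤ S.sup id := by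
        have h2 := hSmax _ hW.2
        rwa [hW.1] at h2
      have hsup : S.sup id = 2*n-5 :=
        le_antisymm (upper_bound' n k d hnd hd1 hk4 S hSU) hsupge
      obtain ⟨⟨hp, hc, hs⟩, hu⟩ := hSU
      obtain ⟨Λ, hΛ, hPhiS⟩ := classify n k d hnd hd1 hk4 S hp hc hs hu hsup
      exact ⟨Λ, hΛ, hPhiS⟩
    · rintro ⟨Λ, hΛ, rfl⟩
      obtain ⟨hp, hc, hs, ho⟩ := hΛ
      have h := hPhiUP Λ hp hc hs ho
      refine ⟨h.2, ?_⟩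
      intro S' hS'
      rw [h.1]
      exact upper_bound' n k d hnd hd1 hk4 S' hS'
  rw [himg, Set.ncard_image_of_injOn (phi_injOn n k d hnd hd1 hk4), hRset]
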